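/- arXiv:2506.20562 — 3 statements merged into one kernel-verified Lean document; each statement's English description precedes it below -/
import Mathlib

section
/- Let k be a finite field of characteristic 3 with |k| = 3^n where n is odd. Then the elliptic curve E : y^2 = x^3 - x over k has exactly 3^n + 1 points, i.e. the group of points of E over k (including the point at infinity) has cardinality 3^n + 1. -/
open scoped Classical

/-- The points of a Weierstrass curve are an option type over the nonsingular affine points. -/
private def pointEquivAux {R : Type*} [CommRing R] (W : WeierstrassCurve.Affine R) :
    W.Point ≃ Option {p : R × R // W.Nonsingular p.1 p.2} where
  toFun P := match P with
    | .zero => none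
    | @WeierstrassCurve.Affine.Point.some _ _ _ x y h => some ⟨(x, y), h⟩
  invFun o := match o with
    | none => .zero
    | some ⟨(x, y), h⟩ => .some x y h
  left_inv P := by cases P <;> rfl
  right_inv o := by rcases o with _ | ⟨⟨x, y⟩, h⟩ <;> rfl

private def sigmaEquivAux {k : Type*} [Field k] :
    {p : k × k // p.2 ^ 2 = p.1 ^ 3 - p.1} ≃ Σ x : k, ({y : k | y ^ 2 = x ^ 3 - x} : Set k) where
  toFun p := ⟨p.1.1, p.1.2, p.2⟩
  invFun s := ⟨(s.1, s.2.1), s.2.2⟩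
  left_inv := fun ⟨⟨_, _⟩, _⟩ => rfl
  right_inv := fun ⟨_, _, _⟩ => rfl

private lemma char_sum_zero {k : Type*} [Field k] [Fintype k] [DecidableEq k]
    (hneg : quadraticChar k (-1) = -1) :
    ∑ x : k, quadraticChar k (x ^ 3 - x) = 0 := by
  have h : ∑ x : k, quadraticChar k ((-x) ^ 3 - (-x))
      = ∑ x : k, quadraticChar k (x ^ 3 - x) :=
    Fintype.sum_equiv (Equiv.neg k) _ _ (fun x => rfl)
  have h2 : ∀ x : k, quadraticChar k ((-x) ^ 3 - (-x))
      = - quadraticChar k (x ^ 3 - x) := by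
    intro x
    have hx : (-x) ^ 3 - (-x) = (-1) * (x ^ 3 - x) := by ring
    rw [hx, map_mul, hneg, neg_one_mul]
  rw [Finset.sum_congr rfl (fun x _ => h2 x), Finset.sum_neg_distrib] at h
  omega

/-- The elliptic curve `y² = x³ - x` over a finite field `k` of characteristic 3 with
`|k| = 3 ^ n`, `n` odd, has exactly `3 ^ n + 1` points (including the point at infinity). -/
theorem point_count_y2_eq_x3_sub_x_of_odd (k : Type*) [Field k] [Fintype k] [CharP k 3]
    (n : ℕ) (hn : Odd n) (hcard : Fintype.card k = 3 ^ n) :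
    Nat.card (WeierstrassCurve.Affine.Point (⟨0, 0, 0, -1, 0⟩ : WeierstrassCurve k)) = 3 ^ n + 1 := by
  classical
  set W : WeierstrassCurve.Affine k := (⟨0, 0, 0, -1, 0⟩ : WeierstrassCurve k) with hW
  -- characteristic facts
  have h3 : (3 : k) = 0 := by exact_mod_cast CharP.cast_eq_zero k 3
  have hchar : ringChar k ≠ 2 := by rw [ringChar.eq k 3]; decide
  -- `3 ^ n % 4 = 3` since `n` is odd
  have hmod : Fintype.card k % 4 = 3 := by
    obtain ⟨m, rfl⟩ := hn
    rw [hcard]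
    have h9 : (3 : ℕ) ^ (2 * m + 1) = 9 ^ m * 3 := by
      rw [pow_succ, pow_mul]; norm_num
    rw [h9, Nat.mul_mod, Nat.pow_mod]; norm_num
  have hneg : quadraticChar k (-1) = -1 :=
    quadraticChar_neg_one_iff_not_isSquare.mpr
      (by rw [FiniteField.isSquare_neg_one_iff]; simp [hmod])
  -- nonsingularity is equivalent to the equation
  have hns : ∀ x y : k, W.Nonsingular x y ↔ y ^ 2 = x ^ 3 - x := by
    intro x y
    rw [WeierstrassCurve.Affine.nonsingular_iff, WeierstrassCurve.Affine.equation_iff]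
    have ha1 : W.a₁ = 0 := rfl
    have ha2 : W.a₂ = 0 := rfl
    have ha3 : W.a₃ = 0 := rfl
    have ha4 : W.a₄ = -1 := rfl
    have ha6 : W.a₆ = 0 := rfl
    rw [ha1, ha2, ha3, ha4, ha6]
    constructor
    · rintro ⟨h, -⟩; linear_combination h
    · intro h
      refine ⟨by linear_combination h, Or.inl ?_⟩
      have : 3 * x ^ 2 + 2 * 0 * x + -1 = -1 := by rw [h3]; ring
      rw [this]
      simp
  -- point counting
  have e1 : W.Point ≃ Option {p : k × k // p.2 ^ 2 = p.1 ^ 3 - p.1} :=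
    (pointEquivAux W).trans (Equiv.optionCongr (Equiv.subtypeEquivRight (fun p => hns p.1 p.2)))
  have hfin : Nat.card {p : k × k // p.2 ^ 2 = p.1 ^ 3 - p.1} = 3 ^ n := by
    rw [Nat.card_eq_fintype_card, Fintype.card_congr sigmaEquivAux, Fintype.card_sigma]
    have key : (∑ x : k, (Fintype.card ({y : k | y ^ 2 = x ^ 3 - x} : Set k) : ℤ))
        = (3 : ℤ) ^ n := by
      have h1 : ∀ x : k, (Fintype.card ({y : k | y ^ 2 = x ^ 3 - x} : Set k) : ℤ)
          = quadraticChar k (x ^ 3 - x) + 1 := by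
        intro x
        rw [← Set.toFinset_card]
        exact quadraticChar_card_sqrts hchar (x ^ 3 - x)
      rw [Finset.sum_congr rfl (fun x _ => h1 x), Finset.sum_add_distrib,
        char_sum_zero hneg, Finset.sum_const, Finset.card_univ, hcard]
      push_cast
      ring
    have := key
    exact_mod_cast this
  rw [Nat.card_congr e1]
  have : Finite {p : k × k // p.2 ^ 2 = p.1 ^ 3 - p.1} := inferInstance
  rw [Finite.card_option, hfin]
end

section
/- Let k be a finite field of characteristic 2 with |k| = 2^n where n is odd. Then the elliptic curve E : y^2 + y = x^3 over k has exactly 2^n + 1 points, i.e. the group of points of E over k (including the point at infinity) has cardinality 2^n + 1. -/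
open WeierstrassCurve.Affine

/-- The elliptic curve `y² + y = x³` over a finite field `k` of characteristic 2 with
`|k| = 2 ^ n`, `n` odd, has exactly `2 ^ n + 1` points (including the point at infinity). -/
theorem point_count_y2_add_y_eq_x3_of_odd (k : Type*) [Field k] [Fintype k] [CharP k 2]
    (n : ℕ) (hn : Odd n) (hcard : Fintype.card k = 2 ^ n) :
    Nat.card (WeierstrassCurve.Affine.Point (⟨0, 0, 1, 0, 0⟩ : WeierstrassCurve k)) = 2 ^ n + 1 := by
  set W : WeierstrassCurve k := ⟨0, 0, 1, 0, 0⟩ with hW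
  -- 3 is coprime to 2 ^ n - 1 since n is odd
  have h1le : 1 ≤ 2 ^ n := Nat.one_le_two_pow
  have hcop : ¬ (3 ∣ Fintype.card k - 1) := by
    rw [hcard]
    intro h
    have : ((2 ^ n - 1 : ℕ) : ZMod 3) = 0 := (ZMod.natCast_eq_zero_iff _ _).2 h
    rw [Nat.cast_sub h1le] at this
    have h2 : ((2 : ℕ) : ZMod 3) = -1 := by decide
    rw [Nat.cast_pow, h2, hn.neg_one_pow, Nat.cast_one, sub_eq_zero] at this
    exact absurd this (by decide)
  -- cubing is bijective on k
  have hinj : Function.Injective (fun x : k => x ^ 3) := by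
    intro a b hab
    simp only at hab
    rcases eq_or_ne b 0 with rfl | hb
    · rw [zero_pow (by norm_num : (3:ℕ) ≠ 0)] at hab
      exact pow_eq_zero_iff (n := 3) (by norm_num) |>.1 hab
    · have ha : a ≠ 0 := by
        intro h
        rw [h, zero_pow (by norm_num : (3:ℕ) ≠ 0)] at hab
        exact hb (pow_eq_zero_iff (n := 3) (by norm_num) |>.1 hab.symm)
      have hu : (a / b) ^ 3 = 1 := by rw [div_pow, hab, div_self (pow_ne_zero _ hb)]
      have h3 : orderOf (a / b) ∣ 3 := orderOf_dvd_of_pow_eq_one hu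
      have hc : orderOf (a / b) ∣ Fintype.card k - 1 :=
        orderOf_dvd_of_pow_eq_one (FiniteField.pow_card_sub_one_eq_one _ (div_ne_zero ha hb))
      rcases Nat.prime_three.eq_one_or_self_of_dvd _ h3 with h | h
      · have : a / b = 1 := orderOf_eq_one_iff.1 h
        field_simp at this
        exact this
      · exact absurd (h ▸ hc) hcop
  have hbij : Function.Bijective (fun x : k => x ^ 3) :=
    (Finite.injective_iff_bijective).1 hinj
  let cb : k ≃ k := Equiv.ofBijective _ hbij
  have hcb : ∀ z : k, (cb.symm z) ^ 3 = z := fun z => cb.apply_symm_apply z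
  have hcb' : ∀ x : k, cb.symm (x ^ 3) = x := fun x => cb.symm_apply_apply x
  -- the curve's equation and nonsingularity
  have h2z : (2 : k) = 0 := by
    have := CharP.cast_eq_zero k 2; exact_mod_cast this
  have heq : ∀ x y : k, W.toAffine.Equation x y ↔ y ^ 2 + y = x ^ 3 := by
    intro x y
    rw [WeierstrassCurve.Affine.equation_iff]
    show y ^ 2 + 0 * x * y + 1 * y = x ^ 3 + 0 * x ^ 2 + 0 * x + 0 ↔ _
    constructor <;> intro h <;> linear_combination h
  have hns : ∀ x y : k, W.toAffine.Equation x y → W.toAffine.Nonsingular x y := by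
    intro x y h
    rw [WeierstrassCurve.Affine.nonsingular_iff']
    refine ⟨h, Or.inr ?_⟩
    show 2 * y + 0 * x + 1 ≠ 0
    rw [h2z]; simp
  -- nonsingular point with given y-coordinate
  have hpt : ∀ y : k, W.toAffine.Nonsingular (cb.symm (y ^ 2 + y)) y := by
    intro y
    exact hns _ _ ((heq _ _).2 (hcb _).symm)
  -- the equivalence with Option k
  let e : WeierstrassCurve.Affine.Point W ≃ Option k :=
    { toFun := fun P => match P with
        | .zero => none
        | @WeierstrassCurve.Affine.Point.some _ _ _ x y _ => some y
      invFun := fun o => match o with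
        | none => .zero
        | some y => .some _ _ (hpt y)
      left_inv := by
        rintro (_ | @⟨x, y, h⟩)
        · rfl
        · show WeierstrassCurve.Affine.Point.some _ _ (hpt y) = .some _ _ h
          have hx : cb.symm (y ^ 2 + y) = x := by
            rw [(heq x y).1 h.1, hcb']
          exact hx ▸ rfl
      right_inv := by rintro (_ | y) <;> rfl }
  rw [Nat.card_congr e, Nat.card_eq_fintype_card, Fintype.card_option, hcard]
end

section
/- Let k be a finite field of characteristic 2 with |k| = 2^n where n is even. Then the elliptic curve E : y^2 + y = x^3 over k has exactly 2^n + 1 - 2·(-2)^(n/2) points (as an integer identity for the cardinality of the group of points of E over k, including the point at infinity). -/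
open Finset

namespace PointCountAux

variable {k : Type*} [Field k] [Fintype k] [CharP k 2] [Algebra (ZMod 2) k]

lemma two_eq_zero : (2 : k) = 0 := by
  exact_mod_cast CharP.cast_eq_zero k 2

lemma trace_sq (a : k) :
    Algebra.trace (ZMod 2) k (a ^ 2) = Algebra.trace (ZMod 2) k a := by
  have hbij : Function.Bijective (frobenius k 2) :=
    ⟨(frobenius k 2).injective, Finite.surjective_of_injective (frobenius k 2).injective⟩
  let e : k ≃+* k := RingEquiv.ofBijective (frobenius k 2) hbij
  have he : ∀ x : ZMod 2, e (algebraMap (ZMod 2) k x) = algebraMap (ZMod 2) k x := by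
    intro x
    have hx : ∀ x : ZMod 2, x ^ 2 = x := by decide
    show frobenius k 2 (algebraMap (ZMod 2) k x) = _
    rw [frobenius_def, ← map_pow, hx]
  let e' : k ≃ₐ[ZMod 2] k := AlgEquiv.ofRingEquiv he
  have := Algebra.trace_eq_of_algEquiv e' a
  simpa [e', e, frobenius_def] using this

lemma trace_nondeg {a : k} (ha : ∀ x : k, Algebra.trace (ZMod 2) k (a * x) = 0) :
    a = 0 := by
  have := (traceForm_nondegenerate (ZMod 2) k).1 a
  simp_rw [Algebra.traceForm_apply] at this
  exact this ha

lemma trace_AS (y : k) : Algebra.trace (ZMod 2) k (y ^ 2 + y) = 0 := by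
  rw [map_add, trace_sq]
  exact CharTwo.add_self_eq_zero _

lemma sol_iff {y₀ y : k} : y ^ 2 + y = y₀ ^ 2 + y₀ ↔ y = y₀ ∨ y = y₀ + 1 := by
  constructor
  · intro h
    have h2 : (2 : k) = 0 := two_eq_zero
    have : (y - y₀) * (y - y₀ - 1) = 0 := by
      linear_combination h + (y₀ ^ 2 + y₀ - y * y₀ - y) * h2
    rcases mul_eq_zero.mp this with h' | h'
    · left; exact sub_eq_zero.mp h'
    · right
      have := sub_eq_zero.mp (by linear_combination h' : y - (y₀ + 1) = 0)
      exact this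
  · rintro (rfl | rfl)
    · rfl
    · have h2 : (2 : k) = 0 := two_eq_zero
      linear_combination (y₀ + 1) * h2

lemma exists_AS {u : k} (h : Algebra.trace (ZMod 2) k u = 0) :
    ∃ y : k, y ^ 2 + y = u := by
  classical
  set Kset : Finset k := univ.filter fun v => Algebra.trace (ZMod 2) k v = 0 with hK
  set Iset : Finset k := univ.image fun y : k => y ^ 2 + y with hI
  have hsub : Iset ⊆ Kset := by
    intro v hv
    rw [hI, mem_image] at hv
    obtain ⟨y, -, rfl⟩ := hv
    simp [hK, trace_AS]
  have hcard1 : Fintype.card k ≤ 2 * Iset.card := by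
    have := Finset.card_le_mul_card_image (f := fun y : k => y ^ 2 + y) univ 2 ?_
    · simpa using this
    · intro b hb
      obtain ⟨y₀, -, rfl⟩ := mem_image.mp hb
      have hss : (univ.filter fun a : k => a ^ 2 + a = y₀ ^ 2 + y₀) ⊆ {y₀, y₀ + 1} := by
        intro y hy
        simp only [mem_filter, mem_univ, true_and] at hy
        simpa using sol_iff.mp hy
      calc #(univ.filter fun a : k => (fun y : k => y ^ 2 + y) a = y₀ ^ 2 + y₀) ≤ #({y₀, y₀ + 1} : Finset k) :=
            Finset.card_le_card hss
        _ ≤ 2 := (Finset.card_insert_le _ _).trans (by simp)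
  have hc : ∃ c : k, Algebra.trace (ZMod 2) k c ≠ 0 := by
    by_contra hcon
    push_neg at hcon
    have : (1 : k) = 0 := trace_nondeg (fun x => by simpa using hcon x)
    exact one_ne_zero this
  obtain ⟨c, hc⟩ := hc
  have hcard2 : 2 * Kset.card ≤ Fintype.card k := by
    have hinj : Kset.card ≤ (univ.filter fun v : k => ¬ Algebra.trace (ZMod 2) k v = 0).card := by
      apply Finset.card_le_card_of_injOn (fun v => v + c)
      · intro v hv
        simp only [hK, Finset.mem_coe, mem_filter, mem_univ, true_and] at hv ⊢
        rw [map_add, hv, zero_add]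
        exact hc
      · intro a _ b _ hab
        exact add_right_cancel hab
    have hpart := Finset.card_filter_add_card_filter_not
      (s := (univ : Finset k)) (p := fun v : k => Algebra.trace (ZMod 2) k v = 0)
    rw [← Finset.card_univ, ← hpart, ← hK] at *
    omega
  have hIK : Iset = Kset := by
    apply Finset.eq_of_subset_of_card_le hsub
    have h1 : Iset.card ≤ Kset.card := Finset.card_le_card hsub
    omega
  have hu : u ∈ Kset := by simp [hK, h]
  rw [← hIK, hI, mem_image] at hu
  obtain ⟨y, -, hy⟩ := hu
  exact ⟨y, hy⟩

end PointCountAux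

namespace Part2
open PointCountAux
variable {k : Type*} [Field k] [Fintype k] [CharP k 2] [Algebra (ZMod 2) k] [DecidableEq k]

noncomputable def chi (k : Type*) [Field k] [CharP k 2] [Algebra (ZMod 2) k] (u : k) : ℤ :=
  if Algebra.trace (ZMod 2) k u = 0 then 1 else -1

lemma chi_add (u v : k) : chi k (u + v) = chi k u * chi k v := by
  have : ∀ a b : ZMod 2, a = 0 → b = 0 → a + b = 0 := by decide
  have h01 : ∀ a : ZMod 2, a = 0 ∨ a = 1 := by decide
  unfold chi
  rw [map_add]
  rcases h01 (Algebra.trace (ZMod 2) k u) with h1 | h1 <;>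
    rcases h01 (Algebra.trace (ZMod 2) k v) with h2 | h2 <;>
    simp [h1, h2, show (1 : ZMod 2) + 1 = 0 from by decide]

lemma chi_AS (y : k) : chi k (y ^ 2 + y) = 1 := by
  simp [chi, trace_AS]

lemma card_sol (u : k) :
    ((univ.filter fun y : k => y ^ 2 + y = u).card : ℤ) = 1 + chi k u := by
  classical
  by_cases h : Algebra.trace (ZMod 2) k u = 0
  · obtain ⟨y₀, rfl⟩ := exists_AS h
    have hfil : (univ.filter fun y : k => y ^ 2 + y = y₀ ^ 2 + y₀) = {y₀, y₀ + 1} := by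
      ext y
      simp only [mem_filter, mem_univ, true_and, mem_insert, mem_singleton]
      exact sol_iff
    have hne : y₀ ≠ y₀ + 1 := by
      intro hcon
      exact one_ne_zero (left_eq_add.mp hcon)
    rw [hfil, chi_AS]
    rw [Finset.card_insert_of_notMem (by simpa using hne), Finset.card_singleton]
    norm_num
  · have hfil : (univ.filter fun y : k => y ^ 2 + y = u) = ∅ := by
      ext y
      simp only [mem_filter, mem_univ, true_and, notMem_empty, iff_false]
      intro hy
      exact h (hy ▸ trace_AS y)
    rw [hfil]
    simp [chi, h]

lemma sum_chi_eq_zero {F : k → k} (hadd : ∀ a b : k, F (a + b) = F a + F b)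
    (hx₀ : ∃ x : k, chi k (F x) = -1) : ∑ x : k, chi k (F x) = 0 := by
  obtain ⟨x₀, hx₀⟩ := hx₀
  have h1 : ∑ x : k, chi k (F x) = ∑ x : k, chi k (F (x₀ + x)) :=
    (Fintype.sum_equiv (Equiv.addLeft x₀) (fun x => chi k (F (x₀ + x)))
      (fun y => chi k (F y)) (fun x => rfl)).symm
  have h2 : ∀ x : k, chi k (F (x₀ + x)) = chi k (F x₀) * chi k (F x) := by
    intro x
    rw [hadd, chi_add]
  rw [hx₀] at h2
  have h3 : ∑ x : k, chi k (F x) = -∑ x : k, chi k (F x) := by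
    calc ∑ x : k, chi k (F x) = ∑ x : k, chi k (F (x₀ + x)) := h1
      _ = ∑ x : k, -chi k (F x) := by simp only [h2, neg_one_mul]
      _ = -∑ x : k, chi k (F x) := Finset.sum_neg_distrib _
  linarith

end Part2

namespace Part3
open PointCountAux Part2
variable {k : Type*} [Field k] [Fintype k] [CharP k 2] [Algebra (ZMod 2) k] [DecidableEq k]

lemma inner_sum (t : k) :
    ∑ x : k, chi k (t * x ^ 2 + t ^ 2 * x) =
      if t ^ 4 = t then (Fintype.card k : ℤ) else 0 := by
  have h2 : (2 : k) = 0 := two_eq_zero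
  by_cases ht : t ^ 4 = t
  · rw [if_pos ht]
    have : ∀ x : k, t * x ^ 2 + t ^ 2 * x = (t ^ 2 * x) ^ 2 + t ^ 2 * x := by
      intro x
      linear_combination x ^ 2 * ht + (t*x^2 - t^4*x^2) * h2
    simp only [this, chi_AS]
    simp [Finset.card_univ]
  · rw [if_neg ht]
    apply sum_chi_eq_zero
    · intro a b
      linear_combination (t * a * b) * h2
    · -- find x with chi = -1
      have hne : t ^ 4 - t ≠ 0 := sub_ne_zero.mpr ht
      have : ¬ ∀ x : k, Algebra.trace (ZMod 2) k ((t ^ 4 - t) * x) = 0 := by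
        intro hcon
        exact hne (trace_nondeg hcon)
      push_neg at this
      obtain ⟨x₁, hx₁⟩ := this
      -- get square root of x₁
      have hsurj : Function.Surjective (fun x : k => x ^ 2) := by
        have hinj : Function.Injective (fun x : k => x ^ 2) := by
          intro a b hab
          simpa [frobenius_def] using (frobenius k 2).injective (a₁ := a) (a₂ := b)
            (by simpa [frobenius_def] using hab)
        exact Finite.surjective_of_injective hinj
      obtain ⟨x, hx⟩ := hsurj x₁
      refine ⟨x, ?_⟩
      have htr : Algebra.trace (ZMod 2) k (t * x ^ 2 + t ^ 2 * x) =
          Algebra.trace (ZMod 2) k ((t ^ 4 - t) * x₁) := by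
        have e1 : Algebra.trace (ZMod 2) k (t ^ 2 * x) =
            Algebra.trace (ZMod 2) k (t ^ 4 * x ^ 2) := by
          rw [← trace_sq (t ^ 2 * x)]
          congr 1
          ring
        rw [map_add, e1, ← map_add]
        congr 1
        have : x ^ 2 = x₁ := hx
        rw [← this]
        linear_combination (t * x ^ 2) * h2
      have h01 : ∀ a : ZMod 2, a = 0 ∨ a = 1 := by decide
      unfold chi
      rw [htr, if_neg hx₁]

lemma quartic_roots {ω : k} (hω : ω ^ 2 + ω = 1) :
    (univ.filter fun t : k => t ^ 4 = t) = {0, 1, ω, ω + 1} := by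
  have h2 : (2 : k) = 0 := two_eq_zero
  ext t
  simp only [mem_filter, mem_univ, true_and, mem_insert, mem_singleton]
  constructor
  · intro ht
    have hfact : t * (t - 1) * (t - ω) * (t - (ω + 1)) = 0 := by
      linear_combination ht - (t^2 - t) * hω +
        (2*t^2*ω + t^2*ω^2 - t*ω^2 - t*ω + t - t^3 - t^3*ω) * h2
    rcases mul_eq_zero.mp hfact with h' | h'
    · rcases mul_eq_zero.mp h' with h'' | h''
      · rcases mul_eq_zero.mp h'' with h3 | h3
        · exact Or.inl h3
        · exact Or.inr (Or.inl (sub_eq_zero.mp h3))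
      · exact Or.inr (Or.inr (Or.inl (sub_eq_zero.mp h'')))
    · exact Or.inr (Or.inr (Or.inr (sub_eq_zero.mp h')))
  · rintro (rfl | rfl | h | h)
    · ring
    · ring
    · rw [h]; linear_combination (ω^2 - ω) * hω + (ω^2 - ω) * h2
    · rw [h]; linear_combination (ω^2 + 3*ω + 4) * hω + (ω + 2) * h2

lemma cube_roots {ω : k} (hω : ω ^ 2 + ω = 1) {z : k} (hz : z ^ 3 = 1) :
    z = 1 ∨ z = ω ∨ z = ω + 1 := by
  have h2 : (2 : k) = 0 := two_eq_zero
  have hfact : (z - 1) * (z - ω) * (z - (ω + 1)) = 0 := by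
    linear_combination hz - (z - 1) * hω +
      (2*z*ω + z*ω^2 - z^2 - z^2*ω - ω^2 - ω + 1) * h2
  rcases mul_eq_zero.mp hfact with h' | h'
  · rcases mul_eq_zero.mp h' with h'' | h''
    · exact Or.inl (sub_eq_zero.mp h'')
    · exact Or.inr (Or.inl (sub_eq_zero.mp h''))
  · exact Or.inr (Or.inr (sub_eq_zero.mp h'))

end Part3

namespace Part4
open PointCountAux Part2 Part3
variable {k : Type*} [Field k] [Fintype k] [CharP k 2] [Algebra (ZMod 2) k] [DecidableEq k]

lemma omega_cube {ω : k} (hω : ω ^ 2 + ω = 1) : ω ^ 3 = 1 := by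
  have h2 : (2 : k) = 0 := two_eq_zero
  linear_combination (ω - 1) * hω + (ω - 1) * h2

lemma omega1_cube {ω : k} (hω : ω ^ 2 + ω = 1) : (ω + 1) ^ 3 = 1 := by
  have h2 : (2 : k) = 0 := two_eq_zero
  linear_combination (ω + 2) * hω + (ω + 1) * h2

lemma omega_ne_zero {ω : k} (hω : ω ^ 2 + ω = 1) : ω ≠ 0 := by
  rintro rfl
  simp at hω

lemma omega_ne_one {ω : k} (hω : ω ^ 2 + ω = 1) : ω ≠ 1 := by
  have h2 : (2 : k) = 0 := two_eq_zero
  rintro rfl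
  exact one_ne_zero (by linear_combination hω)

lemma omega_add_one_ne_zero {ω : k} (hω : ω ^ 2 + ω = 1) : ω + 1 ≠ 0 := by
  intro hcon
  exact one_ne_zero (by linear_combination ω * hcon - hω)

lemma three_dvd_S_sub_one {ω : k} (hω : ω ^ 2 + ω = 1) :
    (3 : ℤ) ∣ (∑ x : k, chi k (x ^ 3)) - 1 := by
  classical
  have h2 : (2 : k) = 0 := two_eq_zero
  have hchi0 : chi k ((0 : k) ^ 3) = 1 := by
    norm_num
    simp [chi]
  have hsplit : ∑ x : k, chi k (x ^ 3) =
      chi k ((0 : k) ^ 3) + ∑ x ∈ univ.erase 0, chi k (x ^ 3) :=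
    (Finset.add_sum_erase univ _ (mem_univ 0)).symm
  rw [hsplit, hchi0, add_sub_cancel_left,
    Finset.sum_comp (chi k) (fun x : k => x ^ 3)]
  apply Finset.dvd_sum
  intro b hb
  obtain ⟨x₀, hx₀mem, rfl⟩ := mem_image.mp hb
  have hx₀ : x₀ ≠ 0 := (mem_erase.mp hx₀mem).1
  have hfib : ((univ.erase 0).filter fun a : k => a ^ 3 = x₀ ^ 3) =
      {x₀, ω * x₀, (ω + 1) * x₀} := by
    ext a
    simp only [mem_filter, mem_erase, mem_univ, and_true, true_and, mem_insert,
      mem_singleton]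
    constructor
    · rintro ⟨ha0, ha⟩
      have hz : (a * x₀⁻¹) ^ 3 = 1 := by
        rw [mul_pow, ha]
        field_simp
      rcases cube_roots hω hz with h | h | h
      · left
        field_simp at h
        exact h
      · right; left
        field_simp at h
        linear_combination h
      · right; right
        field_simp at h
        linear_combination h
    · rintro (rfl | rfl | rfl)
      · exact ⟨hx₀, rfl⟩
      · exact ⟨mul_ne_zero (omega_ne_zero hω) hx₀, by rw [mul_pow, omega_cube hω, one_mul]⟩
      · exact ⟨mul_ne_zero (omega_add_one_ne_zero hω) hx₀,
          by rw [mul_pow, omega1_cube hω, one_mul]⟩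
  rw [hfib]
  have hne1 : x₀ ≠ ω * x₀ := by
    intro hcon
    exact (omega_ne_one hω) (by field_simp at hcon; exact hcon.symm)
  have hne2 : x₀ ≠ (ω + 1) * x₀ := by
    intro hcon
    field_simp at hcon
    exact omega_ne_zero hω (by linear_combination -hcon)
  have hne3 : ω * x₀ ≠ (ω + 1) * x₀ := by
    intro hcon
    have : ω = ω + 1 := mul_right_cancel₀ hx₀ hcon
    exact one_ne_zero (by linear_combination -this)
  rw [Finset.card_insert_of_notMem (by simp [hne1, hne2]),
    Finset.card_insert_of_notMem (by simp [hne3]), Finset.card_singleton]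
  rw [show (1 + 1 + 1 : ℕ) = 3 from rfl]
  rw [nsmul_eq_mul]
  exact Dvd.intro _ rfl

end Part4

namespace Part5
open PointCountAux Part2 Part3 Part4
variable {k : Type*} [Field k] [Fintype k] [CharP k 2] [Algebra (ZMod 2) k] [DecidableEq k]

lemma S_sq {ω : k} (hω : ω ^ 2 + ω = 1) :
    (∑ x : k, chi k (x ^ 3)) * (∑ x : k, chi k (x ^ 3)) =
      4 * (Fintype.card k : ℤ) := by
  classical
  have h2 : (2 : k) = 0 := two_eq_zero
  have step1 : (∑ x : k, chi k (x ^ 3)) * (∑ x : k, chi k (x ^ 3)) =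
      ∑ x : k, ∑ t : k, chi k (t ^ 3) * chi k (t * x ^ 2 + t ^ 2 * x) := by
    rw [Finset.sum_mul_sum]
    refine Finset.sum_congr rfl fun x _ => ?_
    have e0 : ∑ y : k, chi k (x ^ 3) * chi k (y ^ 3) = ∑ y : k, chi k (x ^ 3 + y ^ 3) := by
      refine Finset.sum_congr rfl fun y _ => (chi_add _ _).symm
    rw [e0]
    have e1 : ∑ t : k, chi k (x ^ 3 + (x + t) ^ 3) = ∑ y : k, chi k (x ^ 3 + y ^ 3) :=
      Fintype.sum_equiv (Equiv.addLeft x) _ _ (fun t => rfl)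
    rw [← e1]
    refine Finset.sum_congr rfl fun t _ => ?_
    have e2 : x ^ 3 + (x + t) ^ 3 = t ^ 3 + (t * x ^ 2 + t ^ 2 * x) := by
      linear_combination (x ^ 3 + x ^ 2 * t + x * t ^ 2) * h2
    rw [e2, chi_add]
  rw [step1, Finset.sum_comm]
  have step2 : ∀ t : k, ∑ x : k, chi k (t ^ 3) * chi k (t * x ^ 2 + t ^ 2 * x) =
      if t ^ 4 = t then chi k (t ^ 3) * (Fintype.card k : ℤ) else 0 := by
    intro t
    rw [← Finset.mul_sum, Part3.inner_sum, mul_ite, mul_zero]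
  rw [Finset.sum_congr rfl fun t _ => step2 t, ← Finset.sum_filter, quartic_roots hω]
  have hω0 := omega_ne_zero hω
  have hω1 := omega_ne_one hω
  have hω2 := omega_add_one_ne_zero hω
  have h01 : (0 : k) ≠ 1 := zero_ne_one
  have h0ω : (0 : k) ≠ ω := fun h => hω0 h.symm
  have h0ω1 : (0 : k) ≠ ω + 1 := fun h => hω2 h.symm
  have h1ω : (1 : k) ≠ ω := fun h => hω1 h.symm
  have h1ω1 : (1 : k) ≠ ω + 1 := by
    intro h
    exact hω0 (by linear_combination -h)
  have hωω1 : ω ≠ ω + 1 := by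
    intro h
    exact one_ne_zero (by linear_combination -h)
  rw [Finset.sum_insert (by simp [h01, h0ω, h0ω1]),
    Finset.sum_insert (by simp [h1ω, h1ω1]),
    Finset.sum_insert (by simpa using hωω1), Finset.sum_singleton]
  have hchi1 : chi k (1 : k) = 1 := by
    rw [← hω]
    exact chi_AS ω
  have c0 : chi k ((0 : k) ^ 3) = 1 := by
    norm_num
    simp [chi]
  have c1 : chi k ((1 : k) ^ 3) = 1 := by
    rw [one_pow, hchi1]
  have c2 : chi k (ω ^ 3) = 1 := by rw [omega_cube hω, hchi1]
  have c3 : chi k ((ω + 1) ^ 3) = 1 := by rw [omega1_cube hω, hchi1]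
  rw [c0, c1, c2, c3]
  ring

end Part5

open PointCountAux Part2 Part3 Part4 Part5

set_option maxHeartbeats 2000000

/-- The elliptic curve `y² + y = x³` over a finite field `k` of characteristic 2 with
`|k| = 2 ^ n`, `n` even, has exactly `2 ^ n + 1 - 2 * (-2) ^ (n / 2)` points
(including the point at infinity). -/
theorem point_count_y2_add_y_eq_x3_of_even (k : Type*) [Field k] [Fintype k] [CharP k 2]
    (n : ℕ) (hn : Even n) (hcard : Fintype.card k = 2 ^ n) :
    (Nat.card (WeierstrassCurve.Affine.Point (⟨0, 0, 1, 0, 0⟩ : WeierstrassCurve k)) : ℤ) =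
      2 ^ n + 1 - 2 * (-2) ^ (n / 2) := by
  classical
  letI : Algebra (ZMod 2) k := ZMod.algebra k 2
  haveI : DecidableEq k := Classical.decEq k
  have h2 : (2 : k) = 0 := two_eq_zero
  -- finrank and trace of 1
  have hfr : Fintype.card k = 2 ^ Module.finrank (ZMod 2) k := by
    have := Module.card_eq_pow_finrank (K := ZMod 2) (V := k)
    rwa [ZMod.card] at this
  have hfrn : Module.finrank (ZMod 2) k = n :=
    Nat.pow_right_injective (le_refl 2) (hfr.symm.trans hcard)
  obtain ⟨m, hm⟩ := hn
  have htr1 : Algebra.trace (ZMod 2) k 1 = 0 := by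
    have h := Algebra.trace_algebraMap (R := ZMod 2) (S := k) 1
    rw [map_one] at h
    rw [h, hfrn, nsmul_eq_mul, mul_one, hm,
      show m + m = 2 * m from by ring, Nat.cast_mul, ZMod.natCast_self, zero_mul]
  obtain ⟨ω, hω⟩ := exists_AS htr1
  -- curve equation and nonsingularity
  have hEq : ∀ x y : k,
      WeierstrassCurve.Affine.Equation (⟨0, 0, 1, 0, 0⟩ : WeierstrassCurve k) x y ↔
        y ^ 2 + y = x ^ 3 := by
    intro x y
    rw [WeierstrassCurve.Affine.equation_iff]
    constructor <;> intro h <;> linear_combination h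
  have hNS : ∀ x y : k, y ^ 2 + y = x ^ 3 →
      WeierstrassCurve.Affine.Nonsingular (⟨0, 0, 1, 0, 0⟩ : WeierstrassCurve k) x y := by
    intro x y h
    rw [WeierstrassCurve.Affine.nonsingular_iff]
    refine ⟨(hEq x y).mpr h, Or.inr ?_⟩
    intro hcon
    exact one_ne_zero (by linear_combination hcon - y * h2 :  (1 : k) = 0)
  -- point count as 1 + affine count
  have e : WeierstrassCurve.Affine.Point (⟨0, 0, 1, 0, 0⟩ : WeierstrassCurve k) ≃
      Option {p : k × k // p.2 ^ 2 + p.2 = p.1 ^ 3} :=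
    { toFun := fun P => match P with
        | .zero => none
        | @WeierstrassCurve.Affine.Point.some _ _ _ x y h => some ⟨(x, y), (hEq x y).mp h.1⟩
      invFun := fun o => match o with
        | none => .zero
        | some ⟨(x, y), hp⟩ => .some x y (hNS x y hp)
      left_inv := by rintro (_ | _) <;> rfl
      right_inv := by rintro (_ | ⟨⟨x, y⟩, hp⟩) <;> rfl }
  have hcardPt : Nat.card (WeierstrassCurve.Affine.Point (⟨0, 0, 1, 0, 0⟩ : WeierstrassCurve k)) =
      Fintype.card {p : k × k // p.2 ^ 2 + p.2 = p.1 ^ 3} + 1 := by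
    rw [Nat.card_congr e, Finite.card_option, Nat.card_eq_fintype_card]
  have hsubcard : Fintype.card {p : k × k // p.2 ^ 2 + p.2 = p.1 ^ 3} =
      ∑ x : k, (univ.filter fun y : k => y ^ 2 + y = x ^ 3).card := by
    rw [Fintype.card_congr (Equiv.subtypeProdEquivSigmaSubtype (fun a b : k => b ^ 2 + b = a ^ 3)),
      Fintype.card_sigma]
    exact Finset.sum_congr rfl fun x _ => Fintype.card_subtype _
  -- the character sum
  set S : ℤ := ∑ x : k, chi k (x ^ 3) with hS
  have hsum : ((∑ x : k, (univ.filter fun y : k => y ^ 2 + y = x ^ 3).card : ℕ) : ℤ) =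
      (Fintype.card k : ℤ) + S := by
    push_cast
    calc (∑ x : k, ((univ.filter fun y : k => y ^ 2 + y = x ^ 3).card : ℤ))
        = ∑ x : k, (1 + chi k (x ^ 3)) := Finset.sum_congr rfl fun x _ => card_sol _
      _ = (Fintype.card k : ℤ) + S := by
          rw [Finset.sum_add_distrib]
          simp [Finset.card_univ, hS]
  have hS2 : S * S = 4 * (Fintype.card k : ℤ) := S_sq hω
  have hS3 : (3 : ℤ) ∣ S - 1 := three_dvd_S_sub_one hω
  have hq : (Fintype.card k : ℤ) = 2 ^ n := by exact_mod_cast hcard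
  have hA : ((-2 : ℤ)) ^ (m + 1) * ((-2 : ℤ)) ^ (m + 1) = 4 * 2 ^ n := by
    have h4 : (4 : ℤ) ^ (m + 1) = 4 * 2 ^ (m + m) := by
      rw [pow_succ, pow_add, show (4 : ℤ) = 2 * 2 from by norm_num, mul_pow]
      ring
    calc ((-2 : ℤ)) ^ (m + 1) * ((-2 : ℤ)) ^ (m + 1)
        = ((-2 : ℤ) * (-2)) ^ (m + 1) := by rw [mul_pow]
      _ = (4 : ℤ) ^ (m + 1) := by norm_num
      _ = 4 * 2 ^ (m + m) := h4
      _ = 4 * 2 ^ n := by rw [hm]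
  have hcases : S = (-2 : ℤ) ^ (m + 1) ∨ S = -((-2 : ℤ) ^ (m + 1)) := by
    have hzero : (S - (-2 : ℤ) ^ (m + 1)) * (S + (-2 : ℤ) ^ (m + 1)) = 0 := by
      linear_combination hS2 - hA + 4 * hq
    rcases mul_eq_zero.mp hzero with h | h
    · exact Or.inl (sub_eq_zero.mp h)
    · exact Or.inr (by linarith)
  have hdvdA : (3 : ℤ) ∣ (-2 : ℤ) ^ (m + 1) - 1 := by
    have hmod : ((-2 : ℤ)) ≡ 1 [ZMOD 3] := by decide
    have := (hmod.pow (m + 1)).dvd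
    simpa using (dvd_neg.mpr this)
  have hfinal : S = (-2 : ℤ) ^ (m + 1) := by
    rcases hcases with h | h
    · exact h
    · exfalso
      rw [h] at hS3
      have hd := dvd_add hS3 hdvdA
      have he : (-(-2 : ℤ) ^ (m + 1) - 1) + ((-2 : ℤ) ^ (m + 1) - 1) = -2 := by ring
      rw [he] at hd
      norm_num at hd
  have hm2 : n / 2 = m := by omega
  rw [hcardPt, hsubcard, hm2]
  push_cast
  push_cast at hsum
  rw [hsum, hq, hfinal, pow_succ]
  ring
end
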